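/- arXiv:1009.0890 — 2 statements merged into one kernel-verified Lean document; each statement's English description precedes it below -/
import Mathlib

section
/- The 2-dimensional Lebesgue measure of the set of pairs (s,t) in the unit square [0,1]² for which the three lengths p = min(s,t), q = |s-t| and r = 1-max(s,t) satisfy 1/p + 1/q + 1/r > 2·max(1/p, 1/q, 1/r) equals (4/25)·(3·√5·ln((3+√5)/2) − 5). (This is the probability that the three pieces of a broken stick are the altitudes of a triangle.) -/
open MeasureTheory Set Real intervalIntegral

noncomputable def H1 (x : ℝ) : ℝ :=
  (5*x-3)/10 * Real.sqrt (5*x^2-6*x+1)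
    - (2*Real.sqrt 5/25) * Real.log ((3-5*x-Real.sqrt 5 * Real.sqrt (5*x^2-6*x+1))/5)

noncomputable def H2 (s : ℝ) : ℝ :=
  s/2 + s^2/4 - ((5*s-1)/20 * Real.sqrt (5*s^2-2*s+1)
    + (Real.sqrt 5/25) * Real.log ((5*s-1+Real.sqrt 5 * Real.sqrt (5*s^2-2*s+1))/5))

lemma sqrt5_sq : (Real.sqrt 5)^2 = 5 := Real.sq_sqrt (by norm_num)
lemma sqrt5_lt3 : Real.sqrt 5 < 3 := by nlinarith [sqrt5_sq, Real.sqrt_nonneg 5]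
lemma sqrt5_gt1 : 1 < Real.sqrt 5 := by nlinarith [sqrt5_sq, Real.sqrt_nonneg 5]

lemma D2_pos (s : ℝ) : 0 < 5*s^2-2*s+1 := by nlinarith [sq_nonneg (5*s-1)]

lemma arg2_pos (s : ℝ) : 0 < 5*s-1+Real.sqrt 5 * Real.sqrt (5*s^2-2*s+1) := by
  have h2 : (Real.sqrt 5 * Real.sqrt (5*s^2-2*s+1))^2 = 5*(5*s^2-2*s+1) := by
    rw [mul_pow, sqrt5_sq, Real.sq_sqrt (D2_pos s).le]
  have h3 : 0 ≤ Real.sqrt 5 * Real.sqrt (5*s^2-2*s+1) := by positivity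
  nlinarith [h2, h3, sq_nonneg (Real.sqrt 5 * Real.sqrt (5*s^2-2*s+1) + (5*s-1)),
    sq_nonneg (Real.sqrt 5 * Real.sqrt (5*s^2-2*s+1) - (5*s-1))]

lemma arg1_pos {x : ℝ} (hD : 0 ≤ 5*x^2-6*x+1) (hx : x ≤ 1/5) :
    0 < 3-5*x-Real.sqrt 5 * Real.sqrt (5*x^2-6*x+1) := by
  have h2 : (Real.sqrt 5 * Real.sqrt (5*x^2-6*x+1))^2 = 5*(5*x^2-6*x+1) := by
    rw [mul_pow, sqrt5_sq, Real.sq_sqrt hD]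
  have h3 : 0 ≤ Real.sqrt 5 * Real.sqrt (5*x^2-6*x+1) := by positivity
  nlinarith [h2, h3]

lemma H2_deriv (s : ℝ) : HasDerivAt H2 ((1 + s - Real.sqrt (5*s^2-2*s+1))/2) s := by
  have hD : HasDerivAt (fun x : ℝ => 5*x^2-2*x+1) (10*s-2) s := by
    have h := (((hasDerivAt_pow 2 s).const_mul (5:ℝ)).sub ((hasDerivAt_id s).const_mul (2:ℝ))).add_const (1:ℝ)
    exact h.congr_deriv (by ring)
  have hDpos := D2_pos s
  have hsq : HasDerivAt (fun x : ℝ => Real.sqrt (5*x^2-2*x+1)) ((10*s-2)/(2*Real.sqrt (5*s^2-2*s+1))) s :=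
    hD.sqrt (ne_of_gt hDpos)
  have hy : (Real.sqrt (5*s^2-2*s+1))^2 = 5*s^2-2*s+1 := Real.sq_sqrt hDpos.le
  have hyne : Real.sqrt (5*s^2-2*s+1) ≠ 0 := by positivity
  have h1 : HasDerivAt (fun x : ℝ => (5*x-1)/20) (5/20 : ℝ) s := by
    have h := (((hasDerivAt_id s).const_mul (5:ℝ)).sub_const (1:ℝ)).div_const 20
    exact h.congr_deriv (by ring)
  have hprod := h1.mul hsq
  have hg : HasDerivAt (fun x : ℝ => (5*x-1+Real.sqrt 5 * Real.sqrt (5*x^2-2*x+1))/5)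
      ((5 + Real.sqrt 5 * ((10*s-2)/(2*Real.sqrt (5*s^2-2*s+1))))/5) s := by
    have h := ((((hasDerivAt_id s).const_mul (5:ℝ)).sub_const (1:ℝ)).add (hsq.const_mul (Real.sqrt 5))).div_const 5
    exact h.congr_deriv (by ring)
  have hgpos : (0:ℝ) < (5*s-1+Real.sqrt 5 * Real.sqrt (5*s^2-2*s+1))/5 := by
    have := arg2_pos s; linarith
  have hlog := (hg.log (ne_of_gt hgpos)).const_mul (Real.sqrt 5/25)
  have hpoly : HasDerivAt (fun x : ℝ => x/2 + x^2/4) (1/2 + s/2) s := by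
    have h := ((hasDerivAt_id s).div_const 2).add ((hasDerivAt_pow 2 s).div_const 4)
    exact h.congr_deriv (by ring)
  have h := hpoly.sub (hprod.add hlog)
  refine h.congr_deriv ?_
  set y := Real.sqrt (5*s^2-2*s+1) with hydef
  set r := Real.sqrt 5 with hrdef
  have h5 : r^2 = 5 := sqrt5_sq
  have hargne : 5*s-1+r*y ≠ 0 := ne_of_gt (arg2_pos s)
  have e1 : (10*s-2)/(2*y) = (5*s-1)/y := by field_simp; ring
  rw [e1]
  have hcore : (5 + r*((5*s-1)/y))/5 / ((5*s-1+r*y)/5) = r/y := by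
    field_simp
    linear_combination (-y)*h5
  rw [hcore]
  field_simp
  linear_combination 250*hy - 40*h5

lemma H1_deriv {x : ℝ} (hx : x ∈ Set.Ioo (0:ℝ) (1/5)) :
    HasDerivAt H1 (Real.sqrt (5*x^2-6*x+1)) x := by
  obtain ⟨hx0, hx5⟩ := hx
  have hDpos : 0 < 5*x^2-6*x+1 := by nlinarith
  have hD : HasDerivAt (fun x : ℝ => 5*x^2-6*x+1) (10*x-6) x := by
    have h := (((hasDerivAt_pow 2 x).const_mul (5:ℝ)).sub ((hasDerivAt_id x).const_mul (6:ℝ))).add_const (1:ℝ)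
    exact h.congr_deriv (by ring)
  have hsq : HasDerivAt (fun t : ℝ => Real.sqrt (5*t^2-6*t+1)) ((10*x-6)/(2*Real.sqrt (5*x^2-6*x+1))) x :=
    hD.sqrt (ne_of_gt hDpos)
  have hy : (Real.sqrt (5*x^2-6*x+1))^2 = 5*x^2-6*x+1 := Real.sq_sqrt hDpos.le
  have hyne : Real.sqrt (5*x^2-6*x+1) ≠ 0 := by positivity
  have h1 : HasDerivAt (fun t : ℝ => (5*t-3)/10) (5/10 : ℝ) x := by
    have h := (((hasDerivAt_id x).const_mul (5:ℝ)).sub_const (3:ℝ)).div_const 10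
    exact h.congr_deriv (by ring)
  have hprod := h1.mul hsq
  have hg : HasDerivAt (fun t : ℝ => (3-5*t-Real.sqrt 5 * Real.sqrt (5*t^2-6*t+1))/5)
      ((-5 - Real.sqrt 5 * ((10*x-6)/(2*Real.sqrt (5*x^2-6*x+1))))/5) x := by
    have h := (((hasDerivAt_const x (3:ℝ)).sub ((hasDerivAt_id x).const_mul (5:ℝ))).sub
      (hsq.const_mul (Real.sqrt 5))).div_const 5
    exact h.congr_deriv (by ring)
  have hgpos : (0:ℝ) < (3-5*x-Real.sqrt 5 * Real.sqrt (5*x^2-6*x+1))/5 := by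
    have := arg1_pos hDpos.le hx5.le; linarith
  have hlog := (hg.log (ne_of_gt hgpos)).const_mul (2*Real.sqrt 5/25)
  have h := hprod.sub hlog
  refine h.congr_deriv ?_
  set y := Real.sqrt (5*x^2-6*x+1) with hydef
  set r := Real.sqrt 5 with hrdef
  have h5 : r^2 = 5 := sqrt5_sq
  have hargne : 3-5*x-r*y ≠ 0 := by
    have := arg1_pos hDpos.le hx5.le; intro hc; rw [← hydef, ← hrdef] at this; linarith [hc ▸ this]
  have e1 : (10*x-6)/(2*y) = (5*x-3)/y := by field_simp; ring
  rw [e1]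
  have hcore : (-5 - r*((5*x-3)/y))/5 / ((3-5*x-r*y)/5) = r/y := by
    field_simp
    linear_combination y*h5
  rw [hcore]
  field_simp
  linear_combination (-125)*hy - 20*h5

lemma D1_cont : Continuous fun x : ℝ => Real.sqrt (5*x^2-6*x+1) :=
  Real.continuous_sqrt.comp (by continuity)

lemma D2_cont : Continuous fun s : ℝ => Real.sqrt (5*s^2-2*s+1) :=
  Real.continuous_sqrt.comp (by continuity)

lemma H1_contOn : ContinuousOn H1 (Set.Icc (0:ℝ) (1/5)) := by
  unfold H1
  apply ContinuousOn.sub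
  · exact ((((continuous_const.mul continuous_id).sub continuous_const).div_const 10).mul D1_cont).continuousOn
  · apply ContinuousOn.mul continuousOn_const
    apply ContinuousOn.log
    · exact (((continuous_const.sub (continuous_const.mul continuous_id)).sub
        (continuous_const.mul D1_cont)).div_const 5).continuousOn
    · intro x hx
      obtain ⟨h0, h5⟩ := hx
      have hD : 0 ≤ 5*x^2-6*x+1 := by nlinarith
      have := arg1_pos hD h5
      positivity

lemma intA1 : ∫ x in (0:ℝ)..(1/5), Real.sqrt (5*x^2-6*x+1)
    = 3/10 - 2*Real.sqrt 5/25 * Real.log ((3+Real.sqrt 5)/2) := by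
  rw [integral_eq_sub_of_hasDeriv_right_of_le (by norm_num) H1_contOn
      (fun x hx => (H1_deriv hx).hasDerivWithinAt)
      (D1_cont.intervalIntegrable _ _)]
  have e1 : H1 (1/5) = -(2*Real.sqrt 5/25 * Real.log (2/5)) := by
    unfold H1
    rw [show 5*(1/5:ℝ)^2-6*(1/5)+1 = 0 by norm_num, Real.sqrt_zero]
    norm_num
  have e2 : H1 0 = -3/10 - 2*Real.sqrt 5/25 * Real.log ((3-Real.sqrt 5)/5) := by
    unfold H1
    rw [show 5*(0:ℝ)^2-6*0+1 = 1 by norm_num, Real.sqrt_one]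
    norm_num
  have key : Real.log ((2:ℝ)/5) = Real.log ((3-Real.sqrt 5)/5) + Real.log ((3+Real.sqrt 5)/2) := by
    rw [← Real.log_mul (by nlinarith [sqrt5_lt3]) (by positivity)]
    congr 1
    linear_combination ((1:ℝ)/10)*sqrt5_sq
  rw [e1, e2, key]; ring

lemma intA2 : ∫ s in (0:ℝ)..1, (1 + s - Real.sqrt (5*s^2-2*s+1))/2
    = 3/10 - 2*Real.sqrt 5/25 * Real.log ((3+Real.sqrt 5)/2) := by
  have hcont : Continuous fun s : ℝ => (1 + s - Real.sqrt (5*s^2-2*s+1))/2 :=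
    ((continuous_const.add continuous_id).sub D2_cont).div_const 2
  rw [integral_eq_sub_of_hasDerivAt (fun x _ => H2_deriv x) (hcont.intervalIntegrable _ _)]
  have h42 : Real.sqrt 4 = 2 := by
    rw [show (4:ℝ) = 2^2 by norm_num, Real.sqrt_sq (by norm_num : (0:ℝ) ≤ 2)]
  have e1 : H2 1 = 3/4 - (2/5 + Real.sqrt 5/25 * Real.log ((4+2*Real.sqrt 5)/5)) := by
    unfold H2
    rw [show 5*(1:ℝ)^2-2*1+1 = 4 by norm_num, h42]
    norm_num
    ring_nf
  have e2 : H2 0 = 1/20 - Real.sqrt 5/25 * Real.log ((Real.sqrt 5-1)/5) := by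
    unfold H2
    rw [show 5*(0:ℝ)^2-2*0+1 = 1 by norm_num, Real.sqrt_one]
    norm_num
    ring_nf
  have key : Real.log ((4+2*Real.sqrt 5)/5)
      = Real.log ((Real.sqrt 5-1)/5) + 2 * Real.log ((3+Real.sqrt 5)/2) := by
    have hmul : ((4:ℝ)+2*Real.sqrt 5)/5 = ((Real.sqrt 5-1)/5) * ((3+Real.sqrt 5)/2)^2 := by
      linear_combination (-(Real.sqrt 5+5)/20)*sqrt5_sq
    rw [hmul, Real.log_mul (by nlinarith [sqrt5_gt1]) (by positivity), Real.log_pow]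
    push_cast; ring
  rw [e1, e2, key]; ring


noncomputable section

lemma graph_null (f : ℝ → ℝ) (hf : Measurable f) :
    volume {p : ℝ × ℝ | p.2 = f p.1} = 0 := by
  have hm : MeasurableSet {p : ℝ × ℝ | p.2 = f p.1} :=
    measurableSet_eq_fun measurable_snd (hf.comp measurable_fst)
  rw [Measure.volume_eq_prod, Measure.prod_apply hm]
  have h : ∀ x : ℝ, volume (Prod.mk x ⁻¹' {p : ℝ × ℝ | p.2 = f p.1}) = 0 := by
    intro x
    have : Prod.mk x ⁻¹' {p : ℝ × ℝ | p.2 = f p.1} = {f x} := by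
      ext y; simp
    rw [this]; exact Real.volume_singleton
  simp [h]

lemma vline_null (c : ℝ) : volume {p : ℝ × ℝ | p.1 = c} = 0 := by
  have : {p : ℝ × ℝ | p.1 = c} = ({c} : Set ℝ) ×ˢ (univ : Set ℝ) := by
    ext ⟨a, b⟩; simp [Set.mem_prod, eq_comm]
  rw [this, Measure.volume_eq_prod, Measure.prod_prod, Real.volume_singleton, zero_mul]

def Scond (p : ℝ × ℝ) : Prop :=
  1 / min p.1 p.2 + 1 / |p.1 - p.2| + 1 / (1 - max p.1 p.2) >
    2 * max (1 / min p.1 p.2) (max (1 / |p.1 - p.2|) (1 / (1 - max p.1 p.2)))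

def SS : Set (ℝ × ℝ) := {p | p.1 ∈ Icc (0:ℝ) 1 ∧ p.2 ∈ Icc (0:ℝ) 1 ∧ Scond p}

lemma Scond_meas : MeasurableSet {p : ℝ × ℝ | Scond p} := by
  unfold Scond
  apply measurableSet_lt <;> measurability

lemma SS_meas : MeasurableSet SS :=
  (measurable_fst measurableSet_Icc).inter
    ((measurable_snd measurableSet_Icc).inter Scond_meas)

lemma Scond_swap (p : ℝ × ℝ) : Scond (p.2, p.1) ↔ Scond p := by
  unfold Scond
  dsimp only
  rw [min_comm p.2 p.1, max_comm p.2 p.1, abs_sub_comm p.2 p.1]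

lemma swap_preserving : MeasurePreserving (Prod.swap : ℝ × ℝ → ℝ × ℝ) volume volume := by
  rw [Measure.volume_eq_prod]
  exact Measure.measurePreserving_swap

lemma cond_iff {s t : ℝ} (hs : 0 < s) (hst : s < t) (ht : t < 1) :
    Scond (s, t) ↔ ((t-s)*(1-t) < s*(1-s) ∧ s*(1-t) < (t-s)*(1-(t-s)) ∧
      s*(t-s) < t*(1-t)) := by
  have hts : (0:ℝ) < t - s := by linarith
  have h1t : (0:ℝ) < 1 - t := by linarith
  unfold Scond
  dsimp only
  rw [min_eq_left hst.le, max_eq_right hst.le, abs_sub_comm, abs_of_pos hts]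
  have key : (2 * max (1/s) (max (1/(t-s)) (1/(1-t))) < 1/s + 1/(t-s) + 1/(1-t))
      ↔ (1/s < 1/(t-s) + 1/(1-t) ∧ 1/(t-s) < 1/s + 1/(1-t) ∧ 1/(1-t) < 1/s + 1/(t-s)) := by
    rw [show (2 * max (1/s) (max (1/(t-s)) (1/(1-t))) < 1/s + 1/(t-s) + 1/(1-t))
        ↔ (max (1/s) (max (1/(t-s)) (1/(1-t))) < (1/s + 1/(t-s) + 1/(1-t))/2) by
      constructor <;> intro <;> linarith]
    rw [max_lt_iff, max_lt_iff]
    constructor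
    · rintro ⟨h1, h2, h3⟩; exact ⟨by linarith, by linarith, by linarith⟩
    · rintro ⟨h1, h2, h3⟩; exact ⟨by linarith, by linarith, by linarith⟩
  rw [gt_iff_lt, key]
  have e1 : (1/s < 1/(t-s) + 1/(1-t)) ↔ ((t-s)*(1-t) < s*(1-s)) := by
    rw [div_add_div _ _ (ne_of_gt hts) (ne_of_gt h1t), div_lt_div_iff₀ hs (by positivity)]
    constructor <;> intro <;> nlinarith
  have e2 : (1/(t-s) < 1/s + 1/(1-t)) ↔ (s*(1-t) < (t-s)*(1-(t-s))) := by
    rw [div_add_div _ _ (ne_of_gt hs) (ne_of_gt h1t), div_lt_div_iff₀ hts (by positivity)]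
    constructor <;> intro <;> nlinarith
  have e3 : (1/(1-t) < 1/s + 1/(t-s)) ↔ (s*(t-s) < t*(1-t)) := by
    rw [div_add_div _ _ (ne_of_gt hs) (ne_of_gt hts), div_lt_div_iff₀ h1t (by positivity)]
    constructor <;> intro <;> nlinarith
  rw [e1, e2, e3]

end
noncomputable section
open Real

def Tri : Set (ℝ × ℝ) := {p | 0 < p.1 ∧ p.1 < p.2 ∧ p.2 < 1}

def GG : Set (ℝ × ℝ) := Tri ∩ {p | Scond p}

def Fa : Set (ℝ × ℝ) := Tri ∩ {p | p.1*(1-p.1) ≤ (p.2-p.1)*(1-p.2)}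
def Fb : Set (ℝ × ℝ) := Tri ∩ {p | (p.2-p.1)*(1-(p.2-p.1)) ≤ p.1*(1-p.2)}
def Fc : Set (ℝ × ℝ) := Tri ∩ {p | p.2*(1-p.2) ≤ p.1*(p.2-p.1)}

lemma Tri_meas : MeasurableSet Tri := by
  unfold Tri
  refine MeasurableSet.inter ?_ (MeasurableSet.inter ?_ ?_)
  · exact measurableSet_lt measurable_const measurable_fst
  · exact measurableSet_lt measurable_fst measurable_snd
  · exact measurableSet_lt measurable_snd measurable_const

lemma Fa_meas : MeasurableSet Fa :=
  Tri_meas.inter (measurableSet_le (by measurability) (by measurability))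
lemma Fb_meas : MeasurableSet Fb :=
  Tri_meas.inter (measurableSet_le (by measurability) (by measurability))
lemma Fc_meas : MeasurableSet Fc :=
  Tri_meas.inter (measurableSet_le (by measurability) (by measurability))
lemma GG_meas : MeasurableSet GG := Tri_meas.inter Scond_meas

lemma GG_eq : GG = Tri ∩ ({p | (p.2-p.1)*(1-p.2) < p.1*(1-p.1)} ∩
    ({p | p.1*(1-p.2) < (p.2-p.1)*(1-(p.2-p.1))} ∩ {p | p.1*(p.2-p.1) < p.2*(1-p.2)})) := by
  ext ⟨s, t⟩
  unfold GG Tri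
  simp only [mem_inter_iff, mem_setOf_eq]
  constructor
  · rintro ⟨⟨h1, h2, h3⟩, hc⟩
    exact ⟨⟨h1, h2, h3⟩, (cond_iff h1 h2 h3).mp hc⟩
  · rintro ⟨⟨h1, h2, h3⟩, hc⟩
    exact ⟨⟨h1, h2, h3⟩, (cond_iff h1 h2 h3).mpr ⟨hc.1, hc.2.1, hc.2.2⟩⟩

lemma Tri_decomp : Tri = GG ∪ (Fa ∪ (Fb ∪ Fc)) := by
  rw [GG_eq]
  ext ⟨s, t⟩
  unfold Tri Fa Fb Fc Tri
  simp only [mem_inter_iff, mem_setOf_eq, mem_union]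
  constructor
  · intro h
    by_cases ha : s*(1-s) ≤ (t-s)*(1-t)
    · exact Or.inr (Or.inl ⟨h, ha⟩)
    by_cases hb : (t-s)*(1-(t-s)) ≤ s*(1-t)
    · exact Or.inr (Or.inr (Or.inl ⟨h, hb⟩))
    by_cases hc : t*(1-t) ≤ s*(t-s)
    · exact Or.inr (Or.inr (Or.inr ⟨h, hc⟩))
    · exact Or.inl ⟨h, by push_neg at ha hb hc; exact ⟨ha, hb, hc⟩⟩
  · rintro (⟨h, _⟩ | ⟨h, _⟩ | ⟨h, _⟩ | ⟨h, _⟩) <;> exact h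

lemma disj_GG_Fa : Disjoint GG (Fa ∪ (Fb ∪ Fc)) := by
  rw [disjoint_left]
  rintro ⟨s, t⟩ hg hf
  rw [GG_eq] at hg
  obtain ⟨⟨h1, h2, h3⟩, ha, hb, hc⟩ := hg
  rcases hf with ⟨_, h⟩ | ⟨_, h⟩ | ⟨_, h⟩ <;> simp only [mem_setOf_eq] at * <;> linarith

lemma disj_Fa_Fb : Disjoint Fa (Fb ∪ Fc) := by
  rw [disjoint_left]
  rintro ⟨s, t⟩ ⟨⟨h1, h2, h3⟩, ha⟩ hf
  simp only [Fb, Fc, mem_inter_iff, mem_setOf_eq, mem_union, Tri] at *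
  rcases hf with ⟨_, h⟩ | ⟨_, h⟩ <;> nlinarith

lemma disj_Fb_Fc : Disjoint Fb Fc := by
  rw [disjoint_left]
  rintro ⟨s, t⟩ ⟨⟨h1, h2, h3⟩, hb⟩ ⟨_, hc⟩
  simp only [mem_setOf_eq, Tri] at *
  nlinarith

end
noncomputable section
open Real

lemma vol_eq_region (F : Set (ℝ × ℝ)) (f g : ℝ → ℝ) (s : Set ℝ)
    (hf : Measurable f) (hg : Measurable g)
    (h1 : regionBetween f g s ⊆ F)
    (h2 : F ⊆ regionBetween f g s ∪ {p : ℝ × ℝ | p.2 = f p.1} ∪ {p : ℝ × ℝ | p.2 = g p.1}) :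
    volume F = volume (regionBetween f g s) := by
  refine le_antisymm ?_ (measure_mono h1)
  refine (measure_mono h2).trans ?_
  refine (measure_union_le _ _).trans ?_
  rw [graph_null g hg, add_zero]
  refine (measure_union_le _ _).trans ?_
  rw [graph_null f hf, add_zero]

lemma Tri_vol : volume Tri = ENNReal.ofReal (1/2) := by
  have hT : Tri = regionBetween (fun x => x) (fun _ => 1) (Ioo 0 1) := by
    ext ⟨s, t⟩
    simp only [Tri, regionBetween, mem_setOf_eq, mem_Ioo]
    constructor
    · rintro ⟨h1, h2, h3⟩; exact ⟨⟨h1, h2.trans h3⟩, h2, h3⟩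
    · rintro ⟨⟨h1, _⟩, h2, h3⟩; exact ⟨h1, h2, h3⟩
  rw [hT, Measure.volume_eq_prod]
  rw [volume_regionBetween_eq_integral (f := fun x => x) (g := fun _ => (1:ℝ)) (s := Ioo 0 1)
    ((continuous_id.integrableOn_Icc).mono_set Ioo_subset_Icc_self)
    ((continuous_const.integrableOn_Icc).mono_set Ioo_subset_Icc_self)
    measurableSet_Ioo (fun x hx => hx.2.le)]
  congr 1
  rw [← integral_Ioc_eq_integral_Ioo, ← intervalIntegral.integral_of_le zero_le_one]
  have he : (∫ x in (0:ℝ)..1, (((fun _ => (1:ℝ)) - fun (y:ℝ) => y) : ℝ → ℝ) x) = ∫ x in (0:ℝ)..1, (1 - x) := by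
    simp [Pi.sub_apply]
  rw [he, intervalIntegral.integral_eq_sub_of_hasDerivAt (f := fun x : ℝ => x - x^2/2)
    (f' := fun x : ℝ => 1 - x)
    (fun x _ => by
      have h := (hasDerivAt_id x).sub ((hasDerivAt_pow 2 x).div_const 2)
      exact h.congr_deriv (by norm_num))
    (((continuous_const.sub continuous_id).intervalIntegrable _ _))]
  norm_num

def fa (s : ℝ) : ℝ := ((1+s) - Real.sqrt (5*s^2-6*s+1))/2
def ga (s : ℝ) : ℝ := ((1+s) + Real.sqrt (5*s^2-6*s+1))/2

lemma Fa_vol : volume Fa = ENNReal.ofReal (∫ x in (0:ℝ)..(1/5), Real.sqrt (5*x^2-6*x+1)) := by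
  have hfc : Continuous fa := by
    unfold fa
    exact ((continuous_const.add continuous_id).sub (Real.continuous_sqrt.comp (by continuity))).div_const 2
  have hgc : Continuous ga := by
    unfold ga
    exact ((continuous_const.add continuous_id).add (Real.continuous_sqrt.comp (by continuity))).div_const 2
  have hfm : Measurable fa := hfc.measurable
  have hgm : Measurable ga := hgc.measurable
  have h1 : regionBetween fa ga (Ioo 0 (1/5)) ⊆ Fa := by
    rintro ⟨s, t⟩ ⟨⟨hs0, hs5⟩, hft, htg⟩
    have hD : (0:ℝ) ≤ 5*s^2-6*s+1 := by nlinarith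
    have hy : (Real.sqrt (5*s^2-6*s+1))^2 = 5*s^2-6*s+1 := Real.sq_sqrt hD
    have hynn : (0:ℝ) ≤ Real.sqrt (5*s^2-6*s+1) := Real.sqrt_nonneg _
    have hlt : Real.sqrt (5*s^2-6*s+1) < 1 - s :=
      (Real.sqrt_lt' (by linarith)).mpr (by nlinarith)
    simp only [fa, ga] at hft htg
    refine ⟨⟨hs0, by linarith, by linarith⟩, ?_⟩
    show s*(1-s) ≤ (t-s)*(1-t)
    nlinarith [mul_pos (sub_pos.2 hft) (sub_pos.2 htg), hy]
  have h2 : Fa ⊆ regionBetween fa ga (Ioo 0 (1/5)) ∪ {p : ℝ × ℝ | p.2 = fa p.1}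
      ∪ {p : ℝ × ℝ | p.2 = ga p.1} := by
    rintro ⟨s, t⟩ ⟨⟨hs0, hst, ht1⟩, hfail⟩
    simp only [mem_setOf_eq] at hfail
    have key : (2*t - (1+s))^2 ≤ 5*s^2-6*s+1 := by nlinarith
    have hD : (0:ℝ) ≤ 5*s^2-6*s+1 := le_trans (sq_nonneg _) key
    have hy : (Real.sqrt (5*s^2-6*s+1))^2 = 5*s^2-6*s+1 := Real.sq_sqrt hD
    have hynn : (0:ℝ) ≤ Real.sqrt (5*s^2-6*s+1) := Real.sqrt_nonneg _
    have habs : |2*t - (1+s)| ≤ Real.sqrt (5*s^2-6*s+1) := Real.abs_le_sqrt key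
    rw [abs_le] at habs
    have hr1 : fa s ≤ t := by simp only [fa]; linarith [habs.1]
    have hr2 : t ≤ ga s := by simp only [ga]; linarith [habs.2]
    rcases eq_or_lt_of_le hr1 with h | h
    · exact Or.inl (Or.inr (by simp only [mem_setOf_eq]; exact h.symm))
    rcases eq_or_lt_of_le hr2 with h' | h'
    · exact Or.inr (by simp only [mem_setOf_eq]; exact h')
    refine Or.inl (Or.inl ⟨⟨hs0, ?_⟩, h, h'⟩)
    have hDpos : 0 < Real.sqrt (5*s^2-6*s+1) := by
      simp only [fa, ga] at h h'; linarith
    have := Real.sqrt_pos.mp hDpos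
    nlinarith
  rw [vol_eq_region Fa fa ga (Ioo 0 (1/5)) hfm hgm h1 h2, Measure.volume_eq_prod,
    volume_regionBetween_eq_integral (f := fa) (g := ga) (s := Ioo 0 (1/5))
      ((hfc.integrableOn_Icc).mono_set Ioo_subset_Icc_self)
      ((hgc.integrableOn_Icc).mono_set Ioo_subset_Icc_self) measurableSet_Ioo
      (fun x _ => by simp only [fa, ga]; linarith [Real.sqrt_nonneg (5*x^2-6*x+1)])]
  congr 1
  rw [← integral_Ioc_eq_integral_Ioo, ← intervalIntegral.integral_of_le (by norm_num : (0:ℝ) ≤ 1/5)]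
  apply intervalIntegral.integral_congr
  intro x _
  simp only [Pi.sub_apply, fa, ga]
  ring

def gb (s : ℝ) : ℝ := ((1+3*s) - Real.sqrt (5*s^2-2*s+1))/2
def fc (s : ℝ) : ℝ := ((1-s) + Real.sqrt (5*s^2-2*s+1))/2

lemma sqrtD2_le (s : ℝ) (hs0 : 0 < s) (hs1 : s < 1) : Real.sqrt (5*s^2-2*s+1) ≤ 1 + s := by
  calc Real.sqrt (5*s^2-2*s+1) ≤ Real.sqrt ((1+s)^2) :=
        Real.sqrt_le_sqrt (by nlinarith)
    _ = 1 + s := Real.sqrt_sq (by linarith)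

lemma Fb_vol : volume Fb
    = ENNReal.ofReal (∫ s in (0:ℝ)..1, (1 + s - Real.sqrt (5*s^2-2*s+1))/2) := by
  have hgc : Continuous gb := by
    unfold gb
    exact ((continuous_const.add (continuous_const.mul continuous_id)).sub
      (Real.continuous_sqrt.comp (by continuity))).div_const 2
  have h1 : regionBetween (fun s => s) gb (Ioo 0 1) ⊆ Fb := by
    rintro ⟨s, t⟩ ⟨⟨hs0, hs1⟩, hst, htg⟩
    have hD : (0:ℝ) < 5*s^2-2*s+1 := by nlinarith [sq_nonneg (5*s-1)]
    have hy : (Real.sqrt (5*s^2-2*s+1))^2 = 5*s^2-2*s+1 := Real.sq_sqrt hD.le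
    have hynn : (0:ℝ) ≤ Real.sqrt (5*s^2-2*s+1) := Real.sqrt_nonneg _
    have h31 : 3*s - 1 < Real.sqrt (5*s^2-2*s+1) := by
      nlinarith [mul_pos hs0 (show (0:ℝ) < 1 - s by linarith)]
    simp only [gb] at htg
    refine ⟨⟨hs0, hst, by linarith⟩, ?_⟩
    show (t-s)*(1-(t-s)) ≤ s*(1-t)
    nlinarith [mul_pos (show (0:ℝ) < 1+3*s-2*t-Real.sqrt (5*s^2-2*s+1) by linarith)
      (show (0:ℝ) < 1+3*s-2*t+Real.sqrt (5*s^2-2*s+1) by linarith)]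
  have h2 : Fb ⊆ regionBetween (fun s => s) gb (Ioo 0 1) ∪ {p : ℝ × ℝ | p.2 = p.1}
      ∪ {p : ℝ × ℝ | p.2 = gb p.1} := by
    rintro ⟨s, t⟩ ⟨⟨hs0, hst, ht1⟩, hfail⟩
    simp only [mem_setOf_eq] at hfail
    have hs1 : s < 1 := hst.trans ht1
    have hD : (0:ℝ) < 5*s^2-2*s+1 := by nlinarith [sq_nonneg (5*s-1)]
    have hy : (Real.sqrt (5*s^2-2*s+1))^2 = 5*s^2-2*s+1 := Real.sq_sqrt hD.le
    have hynn : (0:ℝ) ≤ Real.sqrt (5*s^2-2*s+1) := Real.sqrt_nonneg _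
    have h13 : 1 - 3*s < Real.sqrt (5*s^2-2*s+1) := by
      nlinarith [mul_pos hs0 (show (0:ℝ) < 1 - s by linarith)]
    have hlt : 2*t - (1+3*s) < Real.sqrt (5*s^2-2*s+1) := by linarith
    have hq : (Real.sqrt (5*s^2-2*s+1))^2 ≤ (1+3*s-2*t)^2 := by nlinarith
    have hr2 : t ≤ gb s := by simp only [gb]; nlinarith
    rcases eq_or_lt_of_le hr2 with h | h
    · exact Or.inr (by simp only [mem_setOf_eq]; exact h)
    · exact Or.inl (Or.inl ⟨⟨hs0, hs1⟩, hst, h⟩)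
  rw [vol_eq_region Fb (fun s => s) gb (Ioo 0 1) measurable_id hgc.measurable h1 h2,
    Measure.volume_eq_prod,
    volume_regionBetween_eq_integral (f := fun s => s) (g := gb) (s := Ioo 0 1)
      ((continuous_id.integrableOn_Icc).mono_set Ioo_subset_Icc_self)
      ((hgc.integrableOn_Icc).mono_set Ioo_subset_Icc_self) measurableSet_Ioo
      (fun x hx => by
        simp only [gb]
        have := sqrtD2_le x hx.1 hx.2
        linarith)]
  congr 1
  rw [← integral_Ioc_eq_integral_Ioo, ← intervalIntegral.integral_of_le zero_le_one]
  apply intervalIntegral.integral_congr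
  intro x _
  simp only [Pi.sub_apply, gb]
  ring

lemma Fc_vol : volume Fc
    = ENNReal.ofReal (∫ s in (0:ℝ)..1, (1 + s - Real.sqrt (5*s^2-2*s+1))/2) := by
  have hfcc : Continuous fc := by
    unfold fc
    exact ((continuous_const.sub continuous_id).add
      (Real.continuous_sqrt.comp (by continuity))).div_const 2
  have h1 : regionBetween fc (fun _ => 1) (Ioo 0 1) ⊆ Fc := by
    rintro ⟨s, t⟩ ⟨⟨hs0, hs1⟩, hft, ht1⟩
    have hD : (0:ℝ) < 5*s^2-2*s+1 := by nlinarith [sq_nonneg (5*s-1)]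
    have hy : (Real.sqrt (5*s^2-2*s+1))^2 = 5*s^2-2*s+1 := Real.sq_sqrt hD.le
    have hynn : (0:ℝ) ≤ Real.sqrt (5*s^2-2*s+1) := Real.sqrt_nonneg _
    have h31 : 3*s - 1 < Real.sqrt (5*s^2-2*s+1) := by
      nlinarith [mul_pos hs0 (show (0:ℝ) < 1 - s by linarith)]
    simp only [fc] at hft
    refine ⟨⟨hs0, by linarith, ht1⟩, ?_⟩
    show t*(1-t) ≤ s*(t-s)
    nlinarith [mul_pos (show (0:ℝ) < 2*t-(1-s)-Real.sqrt (5*s^2-2*s+1) by linarith)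
      (show (0:ℝ) < 2*t-(1-s)+Real.sqrt (5*s^2-2*s+1) by linarith)]
  have h2 : Fc ⊆ regionBetween fc (fun _ => 1) (Ioo 0 1) ∪ {p : ℝ × ℝ | p.2 = fc p.1}
      ∪ {p : ℝ × ℝ | p.2 = 1} := by
    rintro ⟨s, t⟩ ⟨⟨hs0, hst, ht1⟩, hfail⟩
    simp only [mem_setOf_eq] at hfail
    have hs1 : s < 1 := hst.trans ht1
    have hD : (0:ℝ) < 5*s^2-2*s+1 := by nlinarith [sq_nonneg (5*s-1)]
    have hy : (Real.sqrt (5*s^2-2*s+1))^2 = 5*s^2-2*s+1 := Real.sq_sqrt hD.le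
    have hynn : (0:ℝ) ≤ Real.sqrt (5*s^2-2*s+1) := Real.sqrt_nonneg _
    have h1s : 1 - s < Real.sqrt (5*s^2-2*s+1) := by
      nlinarith [mul_pos hs0 hs0]
    have hupos : (0:ℝ) < 2*t-(1-s) + Real.sqrt (5*s^2-2*s+1) := by linarith
    have hq : (Real.sqrt (5*s^2-2*s+1))^2 ≤ (2*t-(1-s))^2 := by nlinarith
    have hr1 : fc s ≤ t := by simp only [fc]; nlinarith
    rcases eq_or_lt_of_le hr1 with h | h
    · exact Or.inl (Or.inr (by simp only [mem_setOf_eq]; exact h.symm))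
    · exact Or.inl (Or.inl ⟨⟨hs0, hs1⟩, h, ht1⟩)
  rw [vol_eq_region Fc fc (fun _ => 1) (Ioo 0 1) hfcc.measurable measurable_const h1 h2,
    Measure.volume_eq_prod,
    volume_regionBetween_eq_integral (f := fc) (g := fun _ => (1:ℝ)) (s := Ioo 0 1)
      ((hfcc.integrableOn_Icc).mono_set Ioo_subset_Icc_self)
      ((continuous_const.integrableOn_Icc).mono_set Ioo_subset_Icc_self) measurableSet_Ioo
      (fun x hx => by
        simp only [fc]
        have := sqrtD2_le x hx.1 hx.2
        linarith)]
  congr 1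
  rw [← integral_Ioc_eq_integral_Ioo, ← intervalIntegral.integral_of_le zero_le_one]
  apply intervalIntegral.integral_congr
  intro x _
  simp only [Pi.sub_apply, fc]
  ring


noncomputable section

lemma logL_ge : 3 - Real.sqrt 5 ≤ Real.log ((3+Real.sqrt 5)/2) := by
  have hr : (0:ℝ) ≤ Real.sqrt 5 := Real.sqrt_nonneg 5
  have h1 : Real.log ((2:ℝ)/(1+Real.sqrt 5)) ≤ 2/(1+Real.sqrt 5) - 1 :=
    Real.log_le_sub_one_of_pos (by positivity)
  have hinv : (2:ℝ)/(1+Real.sqrt 5) = (Real.sqrt 5-1)/2 := by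
    rw [div_eq_div_iff (by positivity) (by norm_num)]
    linear_combination (-1:ℝ)*sqrt5_sq
  have hlog2 : Real.log ((3+Real.sqrt 5)/2) = 2 * Real.log ((1+Real.sqrt 5)/2) := by
    rw [show (3+Real.sqrt 5)/2 = ((1+Real.sqrt 5)/2)^2 by linear_combination (-1/4 : ℝ)*sqrt5_sq,
      Real.log_pow]
    push_cast; ring
  have hneg : Real.log ((2:ℝ)/(1+Real.sqrt 5)) = - Real.log ((1+Real.sqrt 5)/2) := by
    rw [show (2:ℝ)/(1+Real.sqrt 5) = ((1+Real.sqrt 5)/2)⁻¹ by rw [inv_div], Real.log_inv]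
  rw [hinv] at h1 hneg
  have h5lt : Real.sqrt 5 < 9/4 := by nlinarith [sqrt5_sq]
  nlinarith [hlog2, hneg, h1]

lemma K_nonneg : 0 ≤ 3/10 - 2*Real.sqrt 5/25 * Real.log ((3+Real.sqrt 5)/2) := by
  have hr : (0:ℝ) ≤ Real.sqrt 5 := Real.sqrt_nonneg 5
  have hub : Real.log ((3+Real.sqrt 5)/2) ≤ (1+Real.sqrt 5)/2 := by
    have := Real.log_le_sub_one_of_pos (show (0:ℝ) < (3+Real.sqrt 5)/2 by positivity)
    linarith
  have hmul := mul_le_mul_of_nonneg_left hub (show (0:ℝ) ≤ 2*Real.sqrt 5/25 by positivity)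
  nlinarith [sqrt5_sq, hmul]

end

noncomputable section
open Set Real

lemma GG_vol : volume GG
    = ENNReal.ofReal (1/2 - 3*(3/10 - 2*Real.sqrt 5/25 * Real.log ((3+Real.sqrt 5)/2))) := by
  have hsum : volume Tri = volume GG + (volume Fa + (volume Fb + volume Fc)) := by
    rw [Tri_decomp,
        measure_union disj_GG_Fa (Fa_meas.union (Fb_meas.union Fc_meas)),
        measure_union disj_Fa_Fb (Fb_meas.union Fc_meas),
        measure_union disj_Fb_Fc Fc_meas]
  rw [Tri_vol, Fa_vol, Fb_vol, Fc_vol, intA1, intA2] at hsum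
  rw [← ENNReal.ofReal_add K_nonneg K_nonneg,
      ← ENNReal.ofReal_add K_nonneg (by linarith [K_nonneg])] at hsum
  have h3 : 3/10 - 2*Real.sqrt 5/25 * Real.log ((3+Real.sqrt 5)/2)
      + (3/10 - 2*Real.sqrt 5/25 * Real.log ((3+Real.sqrt 5)/2)
        + (3/10 - 2*Real.sqrt 5/25 * Real.log ((3+Real.sqrt 5)/2)))
      = 3*(3/10 - 2*Real.sqrt 5/25 * Real.log ((3+Real.sqrt 5)/2)) := by ring
  rw [h3] at hsum
  have h3K : (0:ℝ) ≤ 3*(3/10 - 2*Real.sqrt 5/25 * Real.log ((3+Real.sqrt 5)/2)) := by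
    linarith [K_nonneg]
  calc volume GG
      = volume GG + ENNReal.ofReal (3*(3/10 - 2*Real.sqrt 5/25 * Real.log ((3+Real.sqrt 5)/2)))
        - ENNReal.ofReal (3*(3/10 - 2*Real.sqrt 5/25 * Real.log ((3+Real.sqrt 5)/2))) :=
        (ENNReal.add_sub_cancel_right ENNReal.ofReal_ne_top).symm
    _ = ENNReal.ofReal (1/2)
        - ENNReal.ofReal (3*(3/10 - 2*Real.sqrt 5/25 * Real.log ((3+Real.sqrt 5)/2))) := by
        rw [← hsum]
    _ = ENNReal.ofReal (1/2 - 3*(3/10 - 2*Real.sqrt 5/25 * Real.log ((3+Real.sqrt 5)/2))) :=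
        (ENNReal.ofReal_sub _ h3K).symm

lemma SS_swap_mem (p : ℝ × ℝ) : (p.2, p.1) ∈ SS ↔ p ∈ SS := by
  unfold SS
  simp only [mem_setOf_eq]
  rw [Scond_swap]
  tauto

lemma A_vol : volume (SS ∩ {p : ℝ × ℝ | p.1 < p.2}) = volume GG := by
  apply le_antisymm
  · have hsub : SS ∩ {p : ℝ × ℝ | p.1 < p.2}
        ⊆ (GG ∪ {p : ℝ × ℝ | p.1 = 0}) ∪ {p : ℝ × ℝ | p.2 = 1} := by
      rintro ⟨s, t⟩ ⟨⟨⟨hs0, hs1⟩, ⟨ht0, ht1⟩, hcond⟩, hlt⟩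
      simp only [mem_setOf_eq] at hlt
      rcases eq_or_lt_of_le hs0 with h0 | h0
      · exact Or.inl (Or.inr h0.symm)
      rcases eq_or_lt_of_le ht1 with h1 | h1
      · exact Or.inr h1
      · exact Or.inl (Or.inl ⟨⟨h0, hlt, h1⟩, hcond⟩)
    refine (measure_mono hsub).trans ?_
    refine (measure_union_le _ _).trans ?_
    have hg : volume {p : ℝ × ℝ | p.2 = 1} = 0 := graph_null (fun _ => 1) measurable_const
    rw [hg, add_zero]
    refine (measure_union_le _ _).trans ?_
    rw [vline_null 0, add_zero]
  · apply measure_mono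
    rintro ⟨s, t⟩ ⟨⟨hs0, hst, ht1⟩, hcond⟩
    exact ⟨⟨⟨hs0.le, (hst.trans ht1).le⟩, ⟨(hs0.trans hst).le, ht1.le⟩, hcond⟩, hst⟩

lemma SS_vol2 : volume SS = 2 * volume (SS ∩ {p : ℝ × ℝ | p.1 < p.2}) := by
  have hAm : MeasurableSet (SS ∩ {p : ℝ × ℝ | p.1 < p.2}) :=
    SS_meas.inter (measurableSet_lt measurable_fst measurable_snd)
  have hBm : MeasurableSet (SS ∩ {p : ℝ × ℝ | p.2 < p.1}) :=
    SS_meas.inter (measurableSet_lt measurable_snd measurable_fst)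
  have hC0 : volume (SS ∩ {p : ℝ × ℝ | p.1 = p.2}) = 0 := by
    refine measure_mono_null (fun p hp => hp.2) ?_
    have he : {p : ℝ × ℝ | p.1 = p.2} = {p : ℝ × ℝ | p.2 = p.1} := by
      ext p; simp [eq_comm]
    rw [he]
    exact graph_null (fun x => x) measurable_id
  have hBA : volume (SS ∩ {p : ℝ × ℝ | p.2 < p.1}) = volume (SS ∩ {p : ℝ × ℝ | p.1 < p.2}) := by
    have hpre : Prod.swap ⁻¹' (SS ∩ {p : ℝ × ℝ | p.1 < p.2}) = SS ∩ {p : ℝ × ℝ | p.2 < p.1} := by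
      ext p
      constructor
      · rintro ⟨hss, hlt⟩; exact ⟨(SS_swap_mem p).mp hss, hlt⟩
      · rintro ⟨hss, hlt⟩; exact ⟨(SS_swap_mem p).mpr hss, hlt⟩
    rw [← hpre, swap_preserving.measure_preimage hAm.nullMeasurableSet]
  have hdecomp : SS = ((SS ∩ {p : ℝ × ℝ | p.1 < p.2}) ∪ (SS ∩ {p : ℝ × ℝ | p.2 < p.1}))
      ∪ (SS ∩ {p : ℝ × ℝ | p.1 = p.2}) := by
    ext p
    simp only [mem_union, mem_inter_iff, mem_setOf_eq]
    rcases lt_trichotomy p.1 p.2 with h | h | h <;> tauto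
  have hAB : Disjoint (SS ∩ {p : ℝ × ℝ | p.1 < p.2}) (SS ∩ {p : ℝ × ℝ | p.2 < p.1}) := by
    rw [disjoint_left]
    rintro p ⟨_, h1⟩ ⟨_, h2⟩
    simp only [mem_setOf_eq] at h1 h2
    linarith
  conv_lhs => rw [hdecomp]
  have hu : volume (((SS ∩ {p : ℝ × ℝ | p.1 < p.2}) ∪ (SS ∩ {p : ℝ × ℝ | p.2 < p.1}))
      ∪ (SS ∩ {p : ℝ × ℝ | p.1 = p.2}))
      = volume ((SS ∩ {p : ℝ × ℝ | p.1 < p.2}) ∪ (SS ∩ {p : ℝ × ℝ | p.2 < p.1})) := by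
    refine le_antisymm ((measure_union_le _ _).trans ?_) (measure_mono subset_union_left)
    rw [hC0, add_zero]
  rw [hu, measure_union hAB hBm, hBA, two_mul]

end

theorem broken_stick_altitudes_prob :
    volume {p : ℝ × ℝ | p.1 ∈ Set.Icc (0:ℝ) 1 ∧ p.2 ∈ Set.Icc (0:ℝ) 1 ∧
      1 / min p.1 p.2 + 1 / |p.1 - p.2| + 1 / (1 - max p.1 p.2) >
        2 * max (1 / min p.1 p.2) (max (1 / |p.1 - p.2|) (1 / (1 - max p.1 p.2)))} =
    ENNReal.ofReal (4 / 25 * (3 * Real.sqrt 5 * Real.log ((3 + Real.sqrt 5) / 2) - 5)) := by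
  have hset : {p : ℝ × ℝ | p.1 ∈ Set.Icc (0:ℝ) 1 ∧ p.2 ∈ Set.Icc (0:ℝ) 1 ∧
      1 / min p.1 p.2 + 1 / |p.1 - p.2| + 1 / (1 - max p.1 p.2) >
        2 * max (1 / min p.1 p.2) (max (1 / |p.1 - p.2|) (1 / (1 - max p.1 p.2)))} = SS := rfl
  rw [hset, SS_vol2, A_vol, GG_vol,
    show (2:ENNReal) = ENNReal.ofReal 2 from (ENNReal.ofReal_ofNat 2).symm,
    ← ENNReal.ofReal_mul (by norm_num : (0:ℝ) ≤ 2)]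
  congr 1
  ring
end
end

section
/- Let 0 < u < v < w be real numbers. Then there exist three non-collinear points A, B, C in the Euclidean plane ℝ² such that, with D the orthogonal projection of A onto the line through B and C, M the midpoint of B and C, and N the point strictly between B and C satisfying dist(B,N)·dist(A,C) = dist(N,C)·dist(A,B) (the foot of the internal angle bisector from A), one has dist(A,D) = u, dist(A,N) = v and dist(A,M) = w. Moreover, any such triangle is acute if and only if 2u² > v² and u·√(v⁴ − 3u²(v² − u²))/(2u² − v²) < w < u·v²/(2u² − v²). -/
def pt (x y : ℝ) : EuclideanSpace ℝ (Fin 2) := WithLp.toLp 2 ![x, y]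

lemma pt_congr {x y a b : ℝ} (h1 : x = a) (h2 : y = b) : pt x y = pt a b := by rw [h1, h2]

lemma pt_sub (x y a b : ℝ) : pt x y - pt a b = pt (x-a) (y-b) := by
  ext i; fin_cases i <;> simp [pt]

lemma pt_smul (r x y : ℝ) : r • pt x y = pt (r*x) (r*y) := by
  ext i; fin_cases i <;> simp [pt]

lemma pt_add (x y a b : ℝ) : pt x y + pt a b = pt (x+a) (y+b) := by
  ext i; fin_cases i <;> simp [pt]

lemma pt_dist (x y a b : ℝ) : dist (pt x y) (pt a b) = Real.sqrt ((x-a)^2 + (y-b)^2) := by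
  rw [EuclideanSpace.dist_eq]
  simp [pt, Fin.sum_univ_two, Real.dist_eq, sq_abs]

lemma pt_inner (x y a b : ℝ) : (inner ℝ (pt x y) (pt a b) : ℝ) = x*a + y*b := by
  simp [pt, PiLp.inner_apply, Fin.sum_univ_two]
  ring

lemma pt_inj {x y a b : ℝ} (h : pt x y = pt a b) : x = a ∧ y = b :=
  ⟨by have := congrArg (fun p : EuclideanSpace ℝ (Fin 2) => p 0) h; simpa [pt] using this,
   by have := congrArg (fun p : EuclideanSpace ℝ (Fin 2) => p 1) h; simpa [pt] using this⟩


lemma lemA (u v w n m : ℝ) (h0 : 0 < u) (huv : u < v) (hvw : v < w)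
    (hn2 : n^2 = v^2 - u^2) (hm2 : m^2 = w^2 - u^2) (hn0 : 0 < n) (hnm : n < m) :
    ((u^2*n < m*(u^2-n^2) ∧ m*(u^2-n^2) < 2*n*u^2) ↔
     (2 * u ^ 2 > v ^ 2 ∧
      u * Real.sqrt (v ^ 4 - 3 * u ^ 2 * (v ^ 2 - u ^ 2)) / (2 * u ^ 2 - v ^ 2) < w ∧
      w < u * v ^ 2 / (2 * u ^ 2 - v ^ 2))) := by
  have hv0 : 0 < v := h0.trans huv
  have hw0 : 0 < w := hv0.trans hvw
  have hm0 : 0 < m := hn0.trans hnm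
  have hX : 0 < v ^ 4 - 3 * u ^ 2 * (v ^ 2 - u ^ 2) := by
    nlinarith [sq_nonneg (v^2 - 3/2*u^2), pow_pos h0 4]
  have hXs := Real.sq_sqrt hX.le
  have hXnn := Real.sqrt_nonneg (v ^ 4 - 3 * u ^ 2 * (v ^ 2 - u ^ 2))
  set X := Real.sqrt (v ^ 4 - 3 * u ^ 2 * (v ^ 2 - u ^ 2)) with hXdef
  have e1 : (u*X)^2 = (u^2*n)^2 + u^2*(u^2-n^2)^2 := by
    linear_combination u^2*hXs - u^2*(n^2+v^2-2*u^2)*hn2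
  have e2 : (w*(2*u^2-v^2))^2 = (m*(u^2-n^2))^2 + u^2*(u^2-n^2)^2 := by
    linear_combination (-(2*u^2-v^2)^2)*hm2 + (m^2+u^2)*(3*u^2-v^2-n^2)*hn2
  have e3 : (u*v^2)^2 = (2*n*u^2)^2 + u^2*(u^2-n^2)^2 := by
    linear_combination (-(u^2)*(u^2+n^2+v^2))*hn2
  constructor
  · rintro ⟨h1, h2⟩
    have hpos : 0 < u^2 - n^2 := by nlinarith [mul_pos (mul_pos h0 h0) hn0]
    have h2u : 2*u^2 > v^2 := by nlinarith
    have hk0 : 0 < 2*u^2 - v^2 := by linarith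
    refine ⟨h2u, ?_, ?_⟩
    · rw [div_lt_iff₀ hk0]
      have hsq : (u^2*n)^2 < (m*(u^2-n^2))^2 :=
        pow_lt_pow_left₀ h1 (by positivity) (by norm_num)
      have : (u*X)^2 < (w*(2*u^2-v^2))^2 := by linarith
      exact lt_of_pow_lt_pow_left₀ 2 (by positivity) this
    · rw [lt_div_iff₀ hk0]
      have hsq : (m*(u^2-n^2))^2 < (2*n*u^2)^2 :=
        pow_lt_pow_left₀ h2 (by positivity) (by norm_num)
      have : (w*(2*u^2-v^2))^2 < (u*v^2)^2 := by linarith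
      exact lt_of_pow_lt_pow_left₀ 2 (by positivity) this
  · rintro ⟨h2u, h1, h2⟩
    have hk0 : 0 < 2*u^2 - v^2 := by linarith
    have hpos : 0 < u^2 - n^2 := by linarith [hn2]
    rw [div_lt_iff₀ hk0] at h1
    rw [lt_div_iff₀ hk0] at h2
    constructor
    · have hsq : (u*X)^2 < (w*(2*u^2-v^2))^2 :=
        pow_lt_pow_left₀ h1 (by positivity) (by norm_num)
      have : (u^2*n)^2 < (m*(u^2-n^2))^2 := by linarith
      exact lt_of_pow_lt_pow_left₀ 2 (by positivity) this
    · have hsq : (w*(2*u^2-v^2))^2 < (u*v^2)^2 :=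
        pow_lt_pow_left₀ h2 (by positivity) (by norm_num)
      have : (m*(u^2-n^2))^2 < (2*n*u^2)^2 := by linarith
      exact lt_of_pow_lt_pow_left₀ 2 (by positivity) this

lemma lemB (u v w n m p q : ℝ) (h0 : 0 < u) (huv : u < v) (hvw : v < w)
    (hpq : p + q = 2*m) (hn2 : n^2 = v^2 - u^2) (hm2 : m^2 = w^2 - u^2)
    (hpn : p < n) (hnq : n < q) (hKEY : u^2*(n-m) = n*(p*q-n*m)) (hn0 : 0 < n) :
    ((0 < u^2 + p*q ∧ p < 0 ∧ 0 < q) ↔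
     (2 * u ^ 2 > v ^ 2 ∧
      u * Real.sqrt (v ^ 4 - 3 * u ^ 2 * (v ^ 2 - u ^ 2)) / (2 * u ^ 2 - v ^ 2) < w ∧
      w < u * v ^ 2 / (2 * u ^ 2 - v ^ 2))) := by
  have key2 : n*((n-p)*(n-q)) = (n-m)*(n^2+u^2) := by
    linear_combination -hKEY - n^2*hpq
  have hnm : n < m := by
    nlinarith [mul_pos (sub_pos.mpr hpn) (sub_pos.mpr hnq), sq_nonneg n]
  have hnpq : n*(p*q) = n^2*m + u^2*(n-m) := by linear_combination -hKEY
  have hq0 : 0 < q := hn0.trans hnq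
  rw [← lemA u v w n m h0 huv hvw hn2 hm2 hn0 hnm]
  constructor
  · rintro ⟨hA, hB, hC⟩
    constructor
    · nlinarith [mul_neg_of_neg_of_pos hB hC]
    · nlinarith
  · rintro ⟨h1, h2⟩
    have hpq0 : p*q < 0 := by nlinarith
    refine ⟨by nlinarith, ?_, hq0⟩
    by_contra hp
    push_neg at hp
    nlinarith [mul_nonneg hp hq0.le]

lemma lemC (u v w n m p q : ℝ) (h0 : 0 < u) (huv : u < v) (hvw : v < w)
    (hpq : p + q = 2*m) (hn2 : n^2 = v^2 - u^2) (hm2 : m^2 = w^2 - u^2)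
    (hpn : p < n) (hnq : n < q) (hKEY : u^2*(n-m) = n*(p*q-n*m)) :
    ((0 < u^2 + p*q ∧ p < 0 ∧ 0 < q) ↔
     (2 * u ^ 2 > v ^ 2 ∧
      u * Real.sqrt (v ^ 4 - 3 * u ^ 2 * (v ^ 2 - u ^ 2)) / (2 * u ^ 2 - v ^ 2) < w ∧
      w < u * v ^ 2 / (2 * u ^ 2 - v ^ 2))) := by
  have hv0 : 0 < v := h0.trans huv
  have hn2pos : 0 < n^2 := by nlinarith
  rcases lt_or_gt_of_ne (fun h : n = 0 => by simp [h] at hn2pos : n ≠ 0) with hneg | hpos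
  · have := lemB u v w (-n) (-m) (-q) (-p) h0 huv hvw (by linarith) (by ring_nf; linarith [hn2])
      (by ring_nf; linarith [hm2]) (by linarith) (by linarith) (by linear_combination -hKEY) (by linarith)
    rw [← this]
    constructor
    · rintro ⟨a, b, c⟩; exact ⟨by nlinarith, by linarith, by linarith⟩
    · rintro ⟨a, b, c⟩; exact ⟨by nlinarith, by linarith, by linarith⟩
  · exact lemB u v w n m p q h0 huv hvw hpq hn2 hm2 hpn hnq hKEY hpos

lemma core (u v w σ θ L : ℝ) (h0 : 0 < u) (huv : u < v) (hvw : v < w)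
    (hL : 0 < L) (hθ0 : 0 < θ) (hθ1 : θ < 1)
    (e1 : v^2 = u^2 + (σ-θ)^2*L^2)
    (e2 : w^2 = u^2 + (σ-1/2)^2*L^2)
    (e3 : (θ*L) * Real.sqrt (u^2+(σ-1)^2*L^2) = ((1-θ)*L) * Real.sqrt (u^2+σ^2*L^2)) :
    ((L^2 < (u^2+(σ-1)^2*L^2) + (u^2+σ^2*L^2) ∧
      u^2+(σ-1)^2*L^2 < L^2 + (u^2+σ^2*L^2) ∧
      u^2+σ^2*L^2 < L^2 + (u^2+(σ-1)^2*L^2)) ↔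
     (2 * u ^ 2 > v ^ 2 ∧
      u * Real.sqrt (v ^ 4 - 3 * u ^ 2 * (v ^ 2 - u ^ 2)) / (2 * u ^ 2 - v ^ 2) < w ∧
      w < u * v ^ 2 / (2 * u ^ 2 - v ^ 2))) := by
  have hb2 : (0:ℝ) ≤ u^2+(σ-1)^2*L^2 := by positivity
  have hc2 : (0:ℝ) ≤ u^2+σ^2*L^2 := by positivity
  have e3sq : (θ*L)^2 * (u^2+(σ-1)^2*L^2) = ((1-θ)*L)^2 * (u^2+σ^2*L^2) := by
    have := congrArg (·^2) e3
    simpa [mul_pow, Real.sq_sqrt hb2, Real.sq_sqrt hc2] using this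
  have hKEY2 : (2*L) * (u^2*((θ-σ)*L - (1/2-σ)*L)) =
      (2*L) * (((θ-σ)*L)*(((-σ)*L)*((1-σ)*L) - ((θ-σ)*L)*((1/2-σ)*L))) := by
    linear_combination e3sq
  have hKEY := mul_left_cancel₀ (by positivity : (2*L) ≠ 0) hKEY2
  have hiff := lemC u v w ((θ-σ)*L) ((1/2-σ)*L) ((-σ)*L) ((1-σ)*L) h0 huv hvw
    (by ring) (by linear_combination -e1) (by linear_combination -e2)
    (by nlinarith) (by nlinarith) hKEY
  rw [← hiff]
  clear hiff hKEY hKEY2 e3sq e3 e1 e2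
  have hid1 : 2*(u^2 + ((-σ)*L)*((1-σ)*L)) = (u^2+(σ-1)^2*L^2) + (u^2+σ^2*L^2) - L^2 := by ring
  have hid2 : (u^2+(σ-1)^2*L^2) - (L^2 + (u^2+σ^2*L^2)) = 2*L*((-σ)*L) := by ring
  have hid3 : (u^2+σ^2*L^2) - (L^2 + (u^2+(σ-1)^2*L^2)) = -(2*L*((1-σ)*L)) := by ring
  constructor
  · rintro ⟨a, b, c⟩
    refine ⟨by linarith, ?_, ?_⟩
    · nlinarith [hid2]
    · nlinarith [hid3]
  · rintro ⟨a, b, c⟩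
    refine ⟨by linarith, ?_, ?_⟩
    · nlinarith [mul_pos hL (neg_pos.mpr b), hid2]
    · nlinarith [mul_pos hL c, hid3]

theorem altitude_bisector_median_triangle (u v w : ℝ)
    (h0 : 0 < u) (huv : u < v) (hvw : v < w) :
    (∃ A B C D N : EuclideanSpace ℝ (Fin 2),
      ¬ Collinear ℝ ({A, B, C} : Set (EuclideanSpace ℝ (Fin 2))) ∧
      D ∈ affineSpan ℝ ({B, C} : Set (EuclideanSpace ℝ (Fin 2))) ∧
      inner ℝ (A - D) (B - C) = (0 : ℝ) ∧
      Sbtw ℝ B N C ∧ dist B N * dist A C = dist N C * dist A B ∧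
      dist A D = u ∧ dist A N = v ∧ dist A (midpoint ℝ B C) = w) ∧
    (∀ A B C D N : EuclideanSpace ℝ (Fin 2),
      ¬ Collinear ℝ ({A, B, C} : Set (EuclideanSpace ℝ (Fin 2))) →
      D ∈ affineSpan ℝ ({B, C} : Set (EuclideanSpace ℝ (Fin 2))) →
      inner ℝ (A - D) (B - C) = (0 : ℝ) →
      Sbtw ℝ B N C → dist B N * dist A C = dist N C * dist A B →
      dist A D = u → dist A N = v → dist A (midpoint ℝ B C) = w →
      ((dist B C ^ 2 < dist C A ^ 2 + dist A B ^ 2 ∧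
        dist C A ^ 2 < dist B C ^ 2 + dist A B ^ 2 ∧
        dist A B ^ 2 < dist B C ^ 2 + dist C A ^ 2) ↔
       (2 * u ^ 2 > v ^ 2 ∧
        u * Real.sqrt (v ^ 4 - 3 * u ^ 2 * (v ^ 2 - u ^ 2)) / (2 * u ^ 2 - v ^ 2) < w ∧
        w < u * v ^ 2 / (2 * u ^ 2 - v ^ 2)))) := by
  constructor
  ·
    have hv0 : 0 < v := h0.trans huv
    have hw0 : 0 < w := hv0.trans hvw
    set n := Real.sqrt (v^2 - u^2) with hndef
    set m := Real.sqrt (w^2 - u^2) with hmdef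
    have hn0 : 0 < n := Real.sqrt_pos.mpr (by nlinarith)
    have hn2 : n^2 = v^2 - u^2 := Real.sq_sqrt (by nlinarith)
    have hm2 : m^2 = w^2 - u^2 := Real.sq_sqrt (by nlinarith)
    have hnm : n < m := by
      rw [hndef, hmdef]
      exact Real.sqrt_lt_sqrt (by nlinarith) (by nlinarith)
    have hm0 : 0 < m := hn0.trans hnm
    have harg : 0 < (m-n)*(m*n+u^2)/n := div_pos (mul_pos (by linarith) (by positivity)) hn0
    set t := Real.sqrt ((m-n)*(m*n+u^2)/n) with htdef
    have ht0 : 0 < t := Real.sqrt_pos.mpr harg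
    have ht2 : t^2 = (m-n)*(m*n+u^2)/n := Real.sq_sqrt harg.le
    have ht2' : n*t^2 = (m-n)*(m*n+u^2) := by
      rw [ht2]; field_simp
    have hpn : m - t < n := by
      by_contra hle
      push_neg at hle
      have h1 : t ≤ m - n := by linarith
      have h2 : t^2 ≤ (m-n)^2 := pow_le_pow_left₀ ht0.le h1 2
      have h3 : n*t^2 ≤ n*(m-n)^2 := mul_le_mul_of_nonneg_left h2 hn0.le
      nlinarith [mul_pos (sub_pos.mpr hnm) (show (0:ℝ) < u^2+n^2 by positivity)]
    have hnq : n < m + t := by linarith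
    have hBC : pt (m-t) 0 ≠ pt (m+t) 0 := by
      intro h; have := (pt_inj h).1; linarith
    refine ⟨pt 0 u, pt (m-t) 0, pt (m+t) 0, pt 0 0, pt n 0, ?_, ?_, ?_, ?_, ?_, ?_, ?_, ?_⟩
    · -- not collinear
      intro hcol
      have hmem := hcol.mem_affineSpan_of_mem_of_ne
        (Set.mem_insert_of_mem _ (Set.mem_insert _ _))
        (Set.mem_insert_of_mem _ (Set.mem_insert_of_mem _ rfl))
        (Set.mem_insert _ _) hBC
      rw [show (pt 0 u : EuclideanSpace ℝ (Fin 2)) = (pt 0 u - pt (m-t) 0) +ᵥ pt (m-t) 0 by simp,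
        vadd_left_mem_affineSpan_pair] at hmem
      obtain ⟨r, hr⟩ := hmem
      rw [show pt (m+t) 0 -ᵥ pt (m-t) 0 = pt (2*t) 0 by
          rw [vsub_eq_sub, pt_sub]; exact pt_congr (by ring) (by ring),
        pt_smul, pt_sub] at hr
      have := (pt_inj hr).2
      simp at this
      linarith
    · -- D on line BC
      rw [show (pt 0 0 : EuclideanSpace ℝ (Fin 2)) = (pt 0 0 - pt (m-t) 0) +ᵥ pt (m-t) 0 by simp,
        vadd_left_mem_affineSpan_pair]
      refine ⟨(t-m)/(2*t), ?_⟩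
      rw [show pt (m+t) 0 -ᵥ pt (m-t) 0 = pt (2*t) 0 by
          rw [vsub_eq_sub, pt_sub]; exact pt_congr (by ring) (by ring),
        pt_smul, pt_sub]
      exact pt_congr (by field_simp; ring) (by ring)
    · -- inner product zero
      rw [pt_sub, pt_sub, pt_inner]
      ring
    · -- Sbtw
      have hNlm : AffineMap.lineMap (pt (m-t) 0) (pt (m+t) 0) ((n-(m-t))/(2*t)) = pt n 0 := by
        rw [AffineMap.lineMap_apply_module']
        rw [show (pt (m+t) 0 - pt (m-t) 0 : EuclideanSpace ℝ (Fin 2)) = pt (2*t) 0 by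
            rw [pt_sub]; exact pt_congr (by ring) (by ring),
          pt_smul, pt_add]
        exact pt_congr (by field_simp; ring) (by ring)
      rw [← hNlm]
      refine sbtw_lineMap_iff.mpr ⟨hBC, ?_, ?_⟩
      · have h1 : 0 < n-(m-t) := by linarith
        positivity
      · rw [div_lt_one (by positivity)]
        linarith
    · -- bisector equation
      rw [pt_dist, pt_dist, pt_dist, pt_dist,
        ← Real.sqrt_mul (by positivity) _, ← Real.sqrt_mul (by positivity) _]
      congr 1
      linear_combination (4*t)*ht2'
    · rw [pt_dist, show (0-(0:ℝ))^2 + (u-0)^2 = u^2 by ring]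
      exact Real.sqrt_sq h0.le
    · rw [pt_dist]
      rw [show (0-n)^2 + (u-0)^2 = v^2 by linear_combination hn2]
      exact Real.sqrt_sq hv0.le
    · rw [show midpoint ℝ (pt (m-t) 0) (pt (m+t) 0) = pt m 0 by
        rw [midpoint_eq_smul_add, pt_add, pt_smul]
        exact pt_congr (by rw [invOf_eq_inv]; ring) (by rw [invOf_eq_inv]; ring)]
      rw [pt_dist]
      rw [show (0-m)^2 + (u-0)^2 = w^2 by linear_combination hm2]
      exact Real.sqrt_sq hw0.le

  ·
    intro A B C D N hncol hD hinner hsbtw hbis hu hv hw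
    have hBC : B ≠ C := hsbtw.left_ne_right
    obtain ⟨θ, hθ, hN⟩ := hsbtw.mem_image_Ioo
    have hσex : ∃ r : ℝ, r • (C -ᵥ B) = D -ᵥ B := by
      rw [← vadd_left_mem_affineSpan_pair]
      simpa using hD
    obtain ⟨σ, hσ⟩ := hσex
    set d : EuclideanSpace ℝ (Fin 2) := C - B with hd
    have hd0 : d ≠ 0 := sub_ne_zero.mpr (Ne.symm hBC)
    set L : ℝ := ‖d‖ with hLdef
    have hL : 0 < L := norm_pos_iff.mpr hd0
    have horth : (inner ℝ (A - D) d : ℝ) = 0 := by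
      have hBCd : B - C = -d := by rw [hd]; abel
      rw [hBCd, inner_neg_right] at hinner
      linarith
    have hAD : ‖A - D‖ = u := by rw [← dist_eq_norm]; exact hu
    have key : ∀ r : ℝ, ‖(A - D) + r • d‖^2 = u^2 + r^2 * L^2 := by
      intro r
      rw [norm_add_sq_real, real_inner_smul_right, horth, hAD, norm_smul]
      simp [mul_pow, sq_abs]
      exact Or.inl rfl
    have hDB : D - B = σ • d := by simpa [hd] using hσ.symm
    have hD' : D = σ • d + B := eq_add_of_sub_eq hDB
    have hC' : C = d + B := by rw [hd]; abel
    have hAB : A - B = (A - D) + σ • d := by rw [hD']; abel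
    have hAC : A - C = (A - D) + (σ - 1) • d := by rw [hC', hD']; module
    have hNB : N = θ • d + B := by rw [← hN, AffineMap.lineMap_apply_module']
    have hAN : A - N = (A - D) + (σ - θ) • d := by rw [hNB, hD']; module
    have hM : midpoint ℝ B C = (2⁻¹:ℝ) • d + B := by
      rw [midpoint, AffineMap.lineMap_apply_module']
      norm_num
      exact hd.symm
    have hAM : A - midpoint ℝ B C = (A - D) + (σ - 1/2) • d := by rw [hM, hD']; module
    -- distances
    have hBN : dist B N = θ * L := by
      rw [dist_eq_norm, hNB, show B - (θ • d + B) = -(θ • d) by abel, norm_neg, norm_smul]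
      simp [abs_of_pos hθ.1, hLdef]
    have hNC : dist N C = (1-θ) * L := by
      rw [dist_eq_norm, hNB, show θ • d + B - C = -((1-θ) • d) by rw [hC']; module, norm_neg, norm_smul]
      simp [abs_of_pos (by linarith [hθ.2] : (0:ℝ) < 1 - θ), hLdef]
    have hdBC : dist B C = L := by
      rw [dist_eq_norm, show B - C = -d by rw [hd]; abel, norm_neg]
    have hdAB : dist A B ^2 = u^2 + σ^2*L^2 := by
      rw [dist_eq_norm, hAB, key σ]
    have hdCA : dist C A ^2 = u^2 + (σ-1)^2*L^2 := by
      rw [dist_comm, dist_eq_norm, hAC, key (σ-1)]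
    have hdAC : dist A C = Real.sqrt (u^2 + (σ-1)^2*L^2) := by
      rw [dist_eq_norm, hAC]
      rw [show u^2 + (σ-1)^2*L^2 = ‖A - D + (σ-1) • d‖^2 from (key (σ-1)).symm]
      rw [Real.sqrt_sq (norm_nonneg _)]
    have hdAB' : dist A B = Real.sqrt (u^2 + σ^2*L^2) := by
      rw [dist_eq_norm, hAB]
      rw [show u^2 + σ^2*L^2 = ‖A - D + σ • d‖^2 from (key σ).symm]
      rw [Real.sqrt_sq (norm_nonneg _)]
    have e1 : v^2 = u^2 + (σ-θ)^2*L^2 := by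
      rw [← hv, dist_eq_norm, hAN, key (σ-θ)]
    have e2 : w^2 = u^2 + (σ-1/2)^2*L^2 := by
      rw [← hw, dist_eq_norm, hAM, key (σ-1/2)]
    have e3 : (θ*L) * Real.sqrt (u^2+(σ-1)^2*L^2) = ((1-θ)*L) * Real.sqrt (u^2+σ^2*L^2) := by
      rw [← hBN, ← hNC, ← hdAC, ← hdAB']; exact hbis
    rw [hdBC, hdCA, hdAB]
    exact core u v w σ θ L h0 huv hvw hL hθ.1 hθ.2 e1 e2 e3
end
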